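/- Let 𝓙 = [[𝓙₁,𝓙₂],[𝓙₃,𝓙₄]] be a generalized complex structure on a finite-dimensional real vector space V, let W ⊆ V be a subspace, and let 𝓚 = [[𝓚₁,𝓚₂],[𝓚₃,𝓚₄]] be a generalized complex structure on W. Then W, equipped with 𝓚, satisfies the graph condition if and only if 𝓚₁ = 𝓙₁|_W (in particular W is invariant under 𝓙₁) and 𝓚₃(w) = 𝓙₃(w)|_W for all w ∈ W. -/

import Mathlib

open Module LinearMap

noncomputable def gcPair (V : Type*) [AddCommGroup V] [Module ℝ V]
    (x y : V × Module.Dual ℝ V) : ℝ :=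
  -(1/2) * (x.2 y.1 + y.2 x.1)

noncomputable def IsGCS (V : Type*) [AddCommGroup V] [Module ℝ V]
    (J : (V × Module.Dual ℝ V) →ₗ[ℝ] (V × Module.Dual ℝ V)) : Prop :=
  J ∘ₗ J = -LinearMap.id ∧ ∀ x y, gcPair V (J x) (J y) = gcPair V x y

section Blocks

variable (V : Type*) [AddCommGroup V] [Module ℝ V]

noncomputable def blk1 (J : (V × Module.Dual ℝ V) →ₗ[ℝ] (V × Module.Dual ℝ V)) :
    V →ₗ[ℝ] V :=
  (LinearMap.fst ℝ V (Module.Dual ℝ V)) ∘ₗ J ∘ₗ (LinearMap.inl ℝ V (Module.Dual ℝ V))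

noncomputable def blk2 (J : (V × Module.Dual ℝ V) →ₗ[ℝ] (V × Module.Dual ℝ V)) :
    Module.Dual ℝ V →ₗ[ℝ] V :=
  (LinearMap.fst ℝ V (Module.Dual ℝ V)) ∘ₗ J ∘ₗ (LinearMap.inr ℝ V (Module.Dual ℝ V))

noncomputable def blk3 (J : (V × Module.Dual ℝ V) →ₗ[ℝ] (V × Module.Dual ℝ V)) :
    V →ₗ[ℝ] Module.Dual ℝ V :=
  (LinearMap.snd ℝ V (Module.Dual ℝ V)) ∘ₗ J ∘ₗ (LinearMap.inl ℝ V (Module.Dual ℝ V))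

noncomputable def blk4 (J : (V × Module.Dual ℝ V) →ₗ[ℝ] (V × Module.Dual ℝ V)) :
    Module.Dual ℝ V →ₗ[ℝ] Module.Dual ℝ V :=
  (LinearMap.snd ℝ V (Module.Dual ℝ V)) ∘ₗ J ∘ₗ (LinearMap.inr ℝ V (Module.Dual ℝ V))

noncomputable def ofBlocks (A : V →ₗ[ℝ] V) (B : Module.Dual ℝ V →ₗ[ℝ] V)
    (C : V →ₗ[ℝ] Module.Dual ℝ V) (D : Module.Dual ℝ V →ₗ[ℝ] Module.Dual ℝ V) :
    (V × Module.Dual ℝ V) →ₗ[ℝ] (V × Module.Dual ℝ V) :=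
  LinearMap.prod
    (A ∘ₗ LinearMap.fst ℝ V (Module.Dual ℝ V) + B ∘ₗ LinearMap.snd ℝ V (Module.Dual ℝ V))
    (C ∘ₗ LinearMap.fst ℝ V (Module.Dual ℝ V) + D ∘ₗ LinearMap.snd ℝ V (Module.Dual ℝ V))

/-- The twist `𝓙̃ = [[𝓙₁,-𝓙₂],[-𝓙₃,𝓙₄]]` of `𝓙`. -/
noncomputable def gcTwist (J : (V × Module.Dual ℝ V) →ₗ[ℝ] (V × Module.Dual ℝ V)) :
    (V × Module.Dual ℝ V) →ₗ[ℝ] (V × Module.Dual ℝ V) :=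
  ofBlocks V (blk1 V J) (-(blk2 V J)) (-(blk3 V J)) (blk4 V J)

end Blocks

section Prod

variable (U V : Type*) [AddCommGroup U] [Module ℝ U] [AddCommGroup V] [Module ℝ V]

/-- The natural identification `(U⊕V) ⊕ (U⊕V)* ≅ (U ⊕ U*) ⊕ (V ⊕ V*)`. -/
noncomputable def prodPack :
    ((U × V) × Module.Dual ℝ (U × V)) ≃ₗ[ℝ]
      (U × Module.Dual ℝ U) × (V × Module.Dual ℝ V) :=
  ((LinearEquiv.refl ℝ (U × V)).prodCongr (Module.dualProdDualEquivDual ℝ U V).symm).trans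
    (LinearEquiv.prodProdProdComm ℝ U V (Module.Dual ℝ U) (Module.Dual ℝ V))

/-- The direct sum of the structures `J_U` and `J_V` on `U ⊕ V`. -/
noncomputable def directSum
    (JU : (U × Module.Dual ℝ U) →ₗ[ℝ] (U × Module.Dual ℝ U))
    (JV : (V × Module.Dual ℝ V) →ₗ[ℝ] (V × Module.Dual ℝ V)) :
    ((U × V) × Module.Dual ℝ (U × V)) →ₗ[ℝ] ((U × V) × Module.Dual ℝ (U × V)) :=
  (prodPack U V).symm.toLinearMap ∘ₗ (LinearMap.prodMap JU JV) ∘ₗ (prodPack U V).toLinearMap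

/-- The twisted product structure on `U ⊕ V`: the direct sum of `𝓙̃_U` and `𝓙_V`. -/
noncomputable def twistedProd
    (JU : (U × Module.Dual ℝ U) →ₗ[ℝ] (U × Module.Dual ℝ U))
    (JV : (V × Module.Dual ℝ V) →ₗ[ℝ] (V × Module.Dual ℝ V)) :
    ((U × V) × Module.Dual ℝ (U × V)) →ₗ[ℝ] ((U × V) × Module.Dual ℝ (U × V)) :=
  directSum U V (gcTwist U JU) JV

end Prod

section Subspaces

variable {X : Type*} [AddCommGroup X] [Module ℝ X]

/-- A subspace `Γ` of a GC vector space `(X, J)` is generalized isotropic if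
`J(Γ ⊕ 0) ⊆ Γ ⊕ Ann(Γ)`. -/
def GenIsotropic (J : (X × Module.Dual ℝ X) →ₗ[ℝ] (X × Module.Dual ℝ X))
    (Γ : Submodule ℝ X) : Prop :=
  ∀ x ∈ Γ, J (x, 0) ∈ Γ.prod Γ.dualAnnihilator

/-- A subspace `Γ` of a GC vector space `(X, J)` is generalized coisotropic if
`J(0 ⊕ Ann(Γ)) ⊆ Γ ⊕ Ann(Γ)`. -/
def GenCoisotropic (J : (X × Module.Dual ℝ X) →ₗ[ℝ] (X × Module.Dual ℝ X))
    (Γ : Submodule ℝ X) : Prop :=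
  ∀ f ∈ Γ.dualAnnihilator, J (0, f) ∈ Γ.prod Γ.dualAnnihilator

/-- A subspace `Γ` of a GC vector space `(X, J)` is generalized Lagrangian if
`Γ ⊕ Ann(Γ)` is stable under `J`. -/
def GenLagrangian (J : (X × Module.Dual ℝ X) →ₗ[ℝ] (X × Module.Dual ℝ X))
    (Γ : Submodule ℝ X) : Prop :=
  ∀ p ∈ Γ.prod Γ.dualAnnihilator, J p ∈ Γ.prod Γ.dualAnnihilator

end Subspaces

theorem graph_condition_iff_blocks
    (V : Type*) [AddCommGroup V] [Module ℝ V] [FiniteDimensional ℝ V]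
    (J : (V × Module.Dual ℝ V) →ₗ[ℝ] (V × Module.Dual ℝ V)) (hJ : IsGCS V J)
    (W : Submodule ℝ V)
    (K : (↥W × Module.Dual ℝ ↥W) →ₗ[ℝ] (↥W × Module.Dual ℝ ↥W)) (hK : IsGCS ↥W K) :
    GenIsotropic (twistedProd ↥W V K J) (LinearMap.graph W.subtype) ↔
      ((∀ w : ↥W, (blk1 ↥W K w : V) = blk1 V J ↑w) ∧
       (∀ w w' : ↥W, blk3 ↥W K w w' = blk3 V J ↑w ↑w')) := by
  have key : ∀ w : ↥W,
      (twistedProd ↥W V K J ((w, (↑w : V)), 0) ∈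
        (LinearMap.graph W.subtype).prod (LinearMap.graph W.subtype).dualAnnihilator) ↔
      (((K (w, 0)).1 : V) = (J (↑w, 0)).1 ∧
        ∀ w' : ↥W, (K (w, 0)).2 w' = (J (↑w, 0)).2 ↑w') := by
    intro w
    simp only [twistedProd, directSum, prodPack, gcTwist, ofBlocks,
      blk1, blk2, blk3, LinearEquiv.prodCongr_symm, LinearEquiv.prodCongr_apply,
      LinearEquiv.refl_apply, LinearEquiv.symm_symm,
      Module.dualProdDualEquivDual_apply, LinearMap.coprod_apply,
      Submodule.mem_prod, LinearMap.mem_graph_iff, Submodule.mem_dualAnnihilator]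
    simp only [LinearEquiv.trans_apply, LinearEquiv.trans_symm, LinearEquiv.symm_symm,
      LinearEquiv.prodCongr_symm, LinearEquiv.prodCongr_apply, LinearEquiv.refl_apply,
      LinearMap.coe_comp, LinearEquiv.coe_coe, Function.comp_apply,
      LinearMap.prodMap_apply, LinearMap.prod_apply, Function.prod_apply,
      LinearMap.add_apply, LinearMap.comp_apply, LinearMap.fst_apply,
      LinearMap.snd_apply, LinearMap.inl_apply, LinearMap.inr_apply,
      LinearMap.neg_apply, map_zero, add_zero, zero_add, neg_zero,
      Prod.fst_zero, Prod.snd_zero, LinearEquiv.refl_symm, blk4,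
      LinearEquiv.prodProdProdComm_symm, LinearEquiv.prodProdProdComm_apply,
      Module.dualProdDualEquivDual_apply, LinearMap.coprod_apply,
      Submodule.mem_prod, Submodule.mem_dualAnnihilator, LinearMap.mem_graph_iff,
      Submodule.coe_subtype]
    constructor
    · rintro ⟨h1, h2⟩
      refine ⟨h1.symm, fun w' => ?_⟩
      have := h2 (w', ↑w') rfl
      simp only [LinearMap.neg_apply] at this ⊢
      have hw : (⟨(↑w' : V), w'.2⟩ : ↥W) = w' := rfl
      linarith [this]
    · rintro ⟨h1, h2⟩
      refine ⟨h1.symm, ?_⟩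
      rintro ⟨w', v⟩ hv
      simp only at hv
      subst hv
      have := h2 w'
      simp only [LinearMap.neg_apply]
      linarith [this]
  constructor
  · intro h
    constructor
    · intro w
      have hm := h ((w : ↥W), (↑w : V)) (by simp [LinearMap.mem_graph_iff])
      have := (key w).mp hm
      simpa [blk1] using this.1
    · intro w w'
      have hm := h ((w : ↥W), (↑w : V)) (by simp [LinearMap.mem_graph_iff])
      have := ((key w).mp hm).2 w'
      simpa [blk3] using this
  · rintro ⟨h1, h3⟩
    rintro ⟨w, v⟩ hx
    rw [LinearMap.mem_graph_iff] at hx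
    simp only [Submodule.coe_subtype] at hx
    subst hx
    exact (key w).mpr ⟨by simpa [blk1] using h1 w, fun w' => by simpa [blk3] using h3 w w'⟩
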